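/- arXiv:2507.06635 — 2 statements merged into one kernel-verified Lean document; each statement's English description precedes it below -/
import Mathlib

section
/- The DE solution is non-increasing in the iteration index within each window: for all c ∈ {1,…,N−W+1}, all t ∈ {0,…,T−1} and all z ∈ ℤ, x_z^{(c,t+1)} ≤ x_z^{(c,t)}; moreover 0 ≤ x_z^{(c,t)} ≤ 1 for all c, t, z. -/
open Finset

noncomputable section

namespace SC

/-- λ(x) = L'(x)/L'(1). -/
def lam (L : Polynomial ℝ) (x : ℝ) : ℝ :=
  (Polynomial.derivative L).eval x / (Polynomial.derivative L).eval 1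

/-- ρ(x) = R'(x)/R'(1). -/
def rho (R : Polynomial ℝ) (x : ℝ) : ℝ :=
  (Polynomial.derivative R).eval x / (Polynomial.derivative R).eval 1

/-- ρ'(x) = R''(x)/R'(1). -/
def rhoD (R : Polynomial ℝ) (x : ℝ) : ℝ :=
  (Polynomial.derivative (Polynomial.derivative R)).eval x / (Polynomial.derivative R).eval 1

/-- ε_z = ε for 1 ≤ z ≤ N, 0 otherwise. -/
def epsAt (ε : ℝ) (N : ℕ) (z : ℤ) : ℝ := if 1 ≤ z ∧ z ≤ (N : ℤ) then ε else 0

/-- Windowed DE update f(z, x; c, w, W, ε). -/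
def deUpdate (L R : Polynomial ℝ) (ε : ℝ) (N w W : ℕ) (c : ℤ) (x : ℤ → ℝ) (z : ℤ) : ℝ :=
  if c ≤ z ∧ z ≤ c + (W : ℤ) - 1 then
    (1 / (w : ℝ)) * ∑ k ∈ Finset.range w, epsAt ε N (z - (k : ℤ)) *
      lam L (1 - (1 / (w : ℝ)) * ∑ j ∈ Finset.range w, rho R (1 - x (z + (j : ℤ) - (k : ℤ))))
  else x z

/-- Window potential U(x; ε, c). -/
def windowU (L R : Polynomial ℝ) (ε : ℝ) (w W : ℕ) (c : ℤ) (x : ℤ → ℝ) : ℝ :=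
  ∑ z ∈ Finset.Icc (c - ((w : ℤ) - 1)) (c + (W : ℤ) - 1),
    ((1 / (Polynomial.derivative R).eval 1) * (1 - R.eval (1 - x z))
      - x z * rho R (1 - x z)
      - (ε / (Polynomial.derivative L).eval 1) *
          L.eval (1 - (1 / (w : ℝ)) * ∑ j ∈ Finset.range w, rho R (1 - x (z + (j : ℤ)))))

/-- Single-system potential U(x; ε). -/
def singleU (L R : Polynomial ℝ) (ε : ℝ) (x : ℝ) : ℝ :=
  (1 / (Polynomial.derivative R).eval 1) * (1 - R.eval (1 - x))
    - x * rho R (1 - x)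
    - (ε / (Polynomial.derivative L).eval 1) * L.eval (1 - rho R (1 - x))

def Bd (x : ℤ → ℝ) : Prop := ∀ u : ℤ, 0 ≤ x u ∧ x u ≤ 1

lemma evalMono {P : Polynomial ℝ} (hP : ∀ i, 0 ≤ P.coeff i) {x y : ℝ}
    (hx : 0 ≤ x) (hxy : x ≤ y) : P.eval x ≤ P.eval y := by
  rw [Polynomial.eval_eq_sum_range, Polynomial.eval_eq_sum_range]
  refine Finset.sum_le_sum fun i _ => ?_
  exact mul_le_mul_of_nonneg_left (pow_le_pow_left₀ hx hxy i) (hP i)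

lemma evalNonneg {P : Polynomial ℝ} (hP : ∀ i, 0 ≤ P.coeff i) {x : ℝ}
    (hx : 0 ≤ x) : 0 ≤ P.eval x := by
  rw [Polynomial.eval_eq_sum_range]
  exact Finset.sum_nonneg fun i _ => mul_nonneg (hP i) (pow_nonneg hx i)

lemma coeffDerivNonneg {P : Polynomial ℝ} (hP : ∀ i, 0 ≤ P.coeff i) :
    ∀ i, 0 ≤ (Polynomial.derivative P).coeff i := fun i => by
  rw [Polynomial.coeff_derivative]
  exact mul_nonneg (hP _) (by positivity)

lemma lam_nonneg {L : Polynomial ℝ} (hL : ∀ i, 0 ≤ L.coeff i)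
    (hL' : 0 < (Polynomial.derivative L).eval 1) {x : ℝ} (hx : 0 ≤ x) : 0 ≤ lam L x :=
  div_nonneg (evalNonneg (coeffDerivNonneg hL) hx) hL'.le

lemma lam_le_one {L : Polynomial ℝ} (hL : ∀ i, 0 ≤ L.coeff i)
    (hL' : 0 < (Polynomial.derivative L).eval 1) {x : ℝ} (hx : 0 ≤ x) (hx1 : x ≤ 1) :
    lam L x ≤ 1 := by
  rw [lam, div_le_one hL']
  exact evalMono (coeffDerivNonneg hL) hx hx1

lemma lam_mono {L : Polynomial ℝ} (hL : ∀ i, 0 ≤ L.coeff i)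
    (hL' : 0 < (Polynomial.derivative L).eval 1) {a b : ℝ} (ha : 0 ≤ a) (hab : a ≤ b) :
    lam L a ≤ lam L b := by
  unfold lam
  gcongr
  exact evalMono (coeffDerivNonneg hL) ha hab

lemma rho_mem {R : Polynomial ℝ} (hR : ∀ i, 0 ≤ R.coeff i)
    (hR' : 0 < (Polynomial.derivative R).eval 1) {y : ℝ} (h0 : 0 ≤ y) (h1 : y ≤ 1) :
    0 ≤ rho R y ∧ rho R y ≤ 1 := by
  constructor
  · exact div_nonneg (evalNonneg (coeffDerivNonneg hR) h0) hR'.le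
  · rw [rho, div_le_one hR']
    exact evalMono (coeffDerivNonneg hR) h0 h1

lemma rho_mono {R : Polynomial ℝ} (hR : ∀ i, 0 ≤ R.coeff i)
    (hR' : 0 < (Polynomial.derivative R).eval 1) {a b : ℝ} (ha : 0 ≤ a) (hab : a ≤ b) :
    rho R a ≤ rho R b := by
  unfold rho
  gcongr
  exact evalMono (coeffDerivNonneg hR) ha hab

lemma epsAt_mem {ε : ℝ} (hε0 : 0 ≤ ε) (hε1 : ε ≤ 1) (N : ℕ) (z : ℤ) :
    0 ≤ epsAt ε N z ∧ epsAt ε N z ≤ 1 := by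
  unfold epsAt
  split
  · exact ⟨hε0, hε1⟩
  · norm_num

lemma arg_mem {R : Polynomial ℝ} (hR : ∀ i, 0 ≤ R.coeff i)
    (hR' : 0 < (Polynomial.derivative R).eval 1) {w : ℕ} (hw : 1 ≤ w)
    {x : ℤ → ℝ} (hx : Bd x) (g : ℕ → ℤ) :
    0 ≤ 1 - (1 / (w : ℝ)) * ∑ j ∈ Finset.range w, rho R (1 - x (g j)) ∧
      1 - (1 / (w : ℝ)) * ∑ j ∈ Finset.range w, rho R (1 - x (g j)) ≤ 1 := by
  have hwpos : (0 : ℝ) < w := by exact_mod_cast hw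
  have hterm : ∀ j ∈ Finset.range w, 0 ≤ rho R (1 - x (g j)) ∧ rho R (1 - x (g j)) ≤ 1 :=
    fun j _ => rho_mem hR hR' (by linarith [(hx (g j)).2]) (by linarith [(hx (g j)).1])
  have hS0 : 0 ≤ ∑ j ∈ Finset.range w, rho R (1 - x (g j)) :=
    Finset.sum_nonneg fun j hj => (hterm j hj).1
  have hSw : ∑ j ∈ Finset.range w, rho R (1 - x (g j)) ≤ w := by
    calc ∑ j ∈ Finset.range w, rho R (1 - x (g j))
        ≤ ∑ _j ∈ Finset.range w, (1 : ℝ) := Finset.sum_le_sum fun j hj => (hterm j hj).2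
      _ = w := by simp
  have h1 : (1 / (w : ℝ)) * ∑ j ∈ Finset.range w, rho R (1 - x (g j)) ≤ (1 / (w : ℝ)) * w :=
    mul_le_mul_of_nonneg_left hSw (by positivity)
  have h2 : (1 / (w : ℝ)) * (w : ℝ) = 1 := by field_simp
  have h3 : 0 ≤ (1 / (w : ℝ)) * ∑ j ∈ Finset.range w, rho R (1 - x (g j)) :=
    mul_nonneg (by positivity) hS0
  constructor <;> linarith

lemma deUpdate_mem {L R : Polynomial ℝ}
    (hL : ∀ i, 0 ≤ L.coeff i) (hR : ∀ i, 0 ≤ R.coeff i)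
    (hL' : 0 < (Polynomial.derivative L).eval 1) (hR' : 0 < (Polynomial.derivative R).eval 1)
    {ε : ℝ} (hε0 : 0 ≤ ε) (hε1 : ε ≤ 1) {N w W : ℕ} (hw : 1 ≤ w) {c : ℤ}
    {x : ℤ → ℝ} (hx : Bd x) (z : ℤ) :
    0 ≤ deUpdate L R ε N w W c x z ∧ deUpdate L R ε N w W c x z ≤ 1 := by
  have hwpos : (0 : ℝ) < w := by exact_mod_cast hw
  unfold deUpdate
  split
  · set F := fun k : ℕ => epsAt ε N (z - (k : ℤ)) *
      lam L (1 - (1 / (w : ℝ)) * ∑ j ∈ Finset.range w, rho R (1 - x (z + (j : ℤ) - (k : ℤ))))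
      with hF
    have hterm : ∀ k ∈ Finset.range w, 0 ≤ F k ∧ F k ≤ 1 := by
      intro k _
      have ha := arg_mem hR hR' hw hx (fun j => z + (j : ℤ) - (k : ℤ))
      have hl0 := lam_nonneg hL hL' ha.1
      have hl1 := lam_le_one hL hL' ha.1 ha.2
      have he := epsAt_mem hε0 hε1 N (z - (k : ℤ))
      exact ⟨mul_nonneg he.1 hl0, mul_le_one₀ he.2 hl0 hl1⟩
    have hS0 : 0 ≤ ∑ k ∈ Finset.range w, F k :=
      Finset.sum_nonneg fun k hk => (hterm k hk).1
    have hSw : ∑ k ∈ Finset.range w, F k ≤ w := by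
      calc ∑ k ∈ Finset.range w, F k ≤ ∑ _k ∈ Finset.range w, (1 : ℝ) :=
        Finset.sum_le_sum fun k hk => (hterm k hk).2
      _ = w := by simp
    have h1 : (1 / (w : ℝ)) * ∑ k ∈ Finset.range w, F k ≤ (1 / (w : ℝ)) * w :=
      mul_le_mul_of_nonneg_left hSw (by positivity)
    have h2 : (1 / (w : ℝ)) * (w : ℝ) = 1 := by field_simp
    have h3 : 0 ≤ (1 / (w : ℝ)) * ∑ k ∈ Finset.range w, F k := mul_nonneg (by positivity) hS0
    constructor <;> linarith
  · exact hx z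

lemma deUpdate_mono {L R : Polynomial ℝ}
    (hL : ∀ i, 0 ≤ L.coeff i) (hR : ∀ i, 0 ≤ R.coeff i)
    (hL' : 0 < (Polynomial.derivative L).eval 1) (hR' : 0 < (Polynomial.derivative R).eval 1)
    {ε : ℝ} (hε0 : 0 ≤ ε) (hε1 : ε ≤ 1) {N w W : ℕ} (hw : 1 ≤ w) {c : ℤ}
    {x y : ℤ → ℝ} (hx : Bd x) (hy : Bd y) (hxy : ∀ u, x u ≤ y u) (z : ℤ) :
    deUpdate L R ε N w W c x z ≤ deUpdate L R ε N w W c y z := by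
  unfold deUpdate
  split
  · refine mul_le_mul_of_nonneg_left ?_ (by positivity)
    refine Finset.sum_le_sum fun k _ => ?_
    refine mul_le_mul_of_nonneg_left ?_ (epsAt_mem hε0 hε1 N (z - (k : ℤ))).1
    refine lam_mono hL hL' (arg_mem hR hR' hw hx (fun j => z + (j : ℤ) - (k : ℤ))).1 ?_
    have hsum : ∑ j ∈ Finset.range w, rho R (1 - y (z + (j : ℤ) - (k : ℤ)))
        ≤ ∑ j ∈ Finset.range w, rho R (1 - x (z + (j : ℤ) - (k : ℤ))) := by
      refine Finset.sum_le_sum fun j _ => ?_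
      exact rho_mono hR hR' (by linarith [(hy (z + (j : ℤ) - (k : ℤ))).2])
        (by linarith [hxy (z + (j : ℤ) - (k : ℤ))])
    have := mul_le_mul_of_nonneg_left hsum (show (0 : ℝ) ≤ 1 / (w : ℝ) by positivity)
    linarith
  · exact hxy z

lemma deUpdate_congr_window {L R : Polynomial ℝ} {ε : ℝ} {N w W : ℕ} {c c' z : ℤ}
    {x : ℤ → ℝ} (h1 : c ≤ z) (h2 : z ≤ c + (W : ℤ) - 1) (h3 : c' ≤ z)
    (h4 : z ≤ c' + (W : ℤ) - 1) :
    deUpdate L R ε N w W c x z = deUpdate L R ε N w W c' x z := by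
  unfold deUpdate
  rw [if_pos ⟨h1, h2⟩, if_pos ⟨h3, h4⟩]

lemma deUpdate_far {L R : Polynomial ℝ} {ε : ℝ} {N w W : ℕ} {c z : ℤ} {x : ℤ → ℝ}
    (hz : (N : ℤ) + (w : ℤ) ≤ z) (h1 : c ≤ z) (h2 : z ≤ c + (W : ℤ) - 1) :
    deUpdate L R ε N w W c x z = 0 := by
  unfold deUpdate
  rw [if_pos ⟨h1, h2⟩]
  have hzero : ∀ k ∈ Finset.range w, epsAt ε N (z - (k : ℤ)) *
      lam L (1 - (1 / (w : ℝ)) * ∑ j ∈ Finset.range w, rho R (1 - x (z + (j : ℤ) - (k : ℤ)))) = 0 := by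
    intro k hk
    have hkw : k < w := Finset.mem_range.mp hk
    have : epsAt ε N (z - (k : ℤ)) = 0 := by
      unfold epsAt
      rw [if_neg (by omega)]
    rw [this, zero_mul]
  rw [Finset.sum_eq_zero hzero, mul_zero]

/-- within each window configuration the DE solution is non-increasing in
the iteration index, and all DE values lie in `[0,1]`. -/
theorem de_decreasing_in_t_and_bounded
    (L R : Polynomial ℝ)
    (hLcoeff : ∀ i, 0 ≤ L.coeff i) (hRcoeff : ∀ i, 0 ≤ R.coeff i)
    (hL1 : L.eval 1 = 1) (hR1 : R.eval 1 = 1)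
    (hL'pos : 0 < (Polynomial.derivative L).eval 1)
    (hR'pos : 0 < (Polynomial.derivative R).eval 1)
    (ε : ℝ) (hε0 : 0 ≤ ε) (hε1 : ε ≤ 1)
    (N w W T : ℕ) (hw : 1 ≤ w) (hwW : w ≤ W) (hWN : W ≤ N)
    -- the windowed-decoding DE solution
    (X : ℕ → ℕ → ℤ → ℝ)
    (hinit : ∀ z : ℤ, 1 ≤ z → z ≤ (N : ℤ) + (w : ℤ) - 1 → X 1 0 z = 1)
    (hout : ∀ c t : ℕ, ∀ z : ℤ, ¬ (1 ≤ z ∧ z ≤ (N : ℤ) + (w : ℤ) - 1) → X c t z = 0)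
    (hupd : ∀ c : ℕ, 1 ≤ c → c + W ≤ N + 1 → ∀ t : ℕ, t + 1 ≤ T →
      ∀ z : ℤ, 1 ≤ z → z ≤ (N : ℤ) + (w : ℤ) - 1 →
      X c (t + 1) z = deUpdate L R ε N w W (c : ℤ) (X c t) z)
    (hshiftwin : ∀ c : ℕ, 1 ≤ c → (c + 1) + W ≤ N + 1 → ∀ z : ℤ, X (c + 1) 0 z = X c T z) :
    (∀ c : ℕ, 1 ≤ c → c + W ≤ N + 1 → ∀ t : ℕ, t < T → ∀ z : ℤ,
        X c (t + 1) z ≤ X c t z) ∧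
    (∀ c : ℕ, 1 ≤ c → c + W ≤ N + 1 → ∀ t : ℕ, t ≤ T → ∀ z : ℤ,
        0 ≤ X c t z ∧ X c t z ≤ 1) := by
  have hBd0 : Bd (X 1 0) := by
    intro u
    by_cases h : 1 ≤ u ∧ u ≤ (N : ℤ) + (w : ℤ) - 1
    · rw [hinit u h.1 h.2]; exact ⟨zero_le_one, le_refl 1⟩
    · rw [hout 1 0 u h]; exact ⟨le_refl 0, zero_le_one⟩
  -- within-window propagation of the invariant
  have window : ∀ c : ℕ, 1 ≤ c → c + W ≤ N + 1 →
      Bd (X c 0) →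
      (∀ z : ℤ, (c : ℤ) + (W : ℤ) ≤ z → 1 ≤ z → z ≤ (N : ℤ) + (w : ℤ) - 1 → X c 0 z = 1) →
      (∀ z : ℤ, 1 ≤ z → z ≤ (N : ℤ) + (w : ℤ) - 1 →
        deUpdate L R ε N w W (c : ℤ) (X c 0) z ≤ X c 0 z) →
      ((∀ t : ℕ, t ≤ T → Bd (X c t) ∧
        (∀ z : ℤ, (c : ℤ) + (W : ℤ) ≤ z → 1 ≤ z → z ≤ (N : ℤ) + (w : ℤ) - 1 → X c t z = 1) ∧
        (∀ z : ℤ, 1 ≤ z → z ≤ (N : ℤ) + (w : ℤ) - 1 →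
          deUpdate L R ε N w W (c : ℤ) (X c t) z ≤ X c t z)) ∧
       (∀ t : ℕ, t < T → ∀ z : ℤ, X c (t + 1) z ≤ X c t z)) := by
    intro c hc1 hcW hB hO hD
    have hI : ∀ t : ℕ, t ≤ T → Bd (X c t) ∧
        (∀ z : ℤ, (c : ℤ) + (W : ℤ) ≤ z → 1 ≤ z → z ≤ (N : ℤ) + (w : ℤ) - 1 → X c t z = 1) ∧
        (∀ z : ℤ, 1 ≤ z → z ≤ (N : ℤ) + (w : ℤ) - 1 →
          deUpdate L R ε N w W (c : ℤ) (X c t) z ≤ X c t z) := by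
      intro t
      induction t with
      | zero => intro _; exact ⟨hB, hO, hD⟩
      | succ t ih =>
        intro ht
        obtain ⟨ihB, ihO, ihD⟩ := ih (Nat.le_of_succ_le ht)
        have hle : ∀ z : ℤ, X c (t + 1) z ≤ X c t z := by
          intro z
          by_cases hz : 1 ≤ z ∧ z ≤ (N : ℤ) + (w : ℤ) - 1
          · rw [hupd c hc1 hcW t ht z hz.1 hz.2]
            exact ihD z hz.1 hz.2
          · rw [hout c (t + 1) z hz, hout c t z hz]
        have hBd' : Bd (X c (t + 1)) := by
          intro u
          by_cases hz : 1 ≤ u ∧ u ≤ (N : ℤ) + (w : ℤ) - 1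
          · rw [hupd c hc1 hcW t ht u hz.1 hz.2]
            exact deUpdate_mem hLcoeff hRcoeff hL'pos hR'pos hε0 hε1 hw ihB u
          · rw [hout c (t + 1) u hz]; norm_num
        refine ⟨hBd', ?_, ?_⟩
        · intro z hz1 hz2 hz3
          rw [hupd c hc1 hcW t ht z hz2 hz3]
          unfold deUpdate
          rw [if_neg (by omega)]
          exact ihO z hz1 hz2 hz3
        · intro z hz1 hz2
          calc deUpdate L R ε N w W (c : ℤ) (X c (t + 1)) z
              ≤ deUpdate L R ε N w W (c : ℤ) (X c t) z :=
                deUpdate_mono hLcoeff hRcoeff hL'pos hR'pos hε0 hε1 hw hBd' ihB hle z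
            _ = X c (t + 1) z := (hupd c hc1 hcW t ht z hz1 hz2).symm
    refine ⟨hI, ?_⟩
    intro t ht z
    by_cases hz : 1 ≤ z ∧ z ≤ (N : ℤ) + (w : ℤ) - 1
    · rw [hupd c hc1 hcW t ht z hz.1 hz.2]
      exact (hI t (Nat.le_of_lt ht)).2.2 z hz.1 hz.2
    · rw [hout c (t + 1) z hz, hout c t z hz]
  -- the invariant holds at the start of every window
  have start : ∀ c : ℕ, 1 ≤ c → c + W ≤ N + 1 →
      Bd (X c 0) ∧
      (∀ z : ℤ, (c : ℤ) + (W : ℤ) ≤ z → 1 ≤ z → z ≤ (N : ℤ) + (w : ℤ) - 1 → X c 0 z = 1) ∧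
      (∀ z : ℤ, 1 ≤ z → z ≤ (N : ℤ) + (w : ℤ) - 1 →
        deUpdate L R ε N w W (c : ℤ) (X c 0) z ≤ X c 0 z) := by
    intro c hc1
    induction c, hc1 using Nat.le_induction with
    | base =>
      intro _
      refine ⟨hBd0, ?_, ?_⟩
      · intro z _ h1 h2; exact hinit z h1 h2
      · intro z h1 h2
        rw [hinit z h1 h2]
        exact (deUpdate_mem hLcoeff hRcoeff hL'pos hR'pos hε0 hε1 hw hBd0 z).2
    | succ c hc ih =>
      intro hcW1
      have hcW : c + W ≤ N + 1 := by omega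
      obtain ⟨hB, hO, hD⟩ := ih hcW
      obtain ⟨hIc, hdec⟩ := window c hc hcW hB hO hD
      obtain ⟨hBT, hOT, hDT⟩ := hIc T le_rfl
      have hXs : ∀ z : ℤ, X (c + 1) 0 z = X c T z := hshiftwin c hc hcW1
      have hXfun : X (c + 1) 0 = X c T := funext hXs
      refine ⟨?_, ?_, ?_⟩
      · intro u; rw [hXs u]; exact hBT u
      · intro z hz1 hz2 hz3
        rw [hXs z]
        exact hOT z (by push_cast at hz1 ⊢; omega) hz2 hz3
      · intro z hz1 hz2
        rw [hXfun]
        have hcast : ((c + 1 : ℕ) : ℤ) = (c : ℤ) + 1 := by push_cast; ring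
        rw [hcast]
        by_cases hwin : (c : ℤ) + 1 ≤ z ∧ z ≤ (c : ℤ) + 1 + (W : ℤ) - 1
        · by_cases hz' : z ≤ (c : ℤ) + (W : ℤ) - 1
          · have heq : deUpdate L R ε N w W ((c : ℤ) + 1) (X c T) z
                = deUpdate L R ε N w W (c : ℤ) (X c T) z :=
              deUpdate_congr_window hwin.1 hwin.2 (by omega) hz'
            rw [heq]
            rcases Nat.eq_zero_or_pos T with hT | hT
            · rw [hT]; exact hD z hz1 hz2
            · obtain ⟨k, hk⟩ : ∃ k, T = k + 1 := ⟨T - 1, by omega⟩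
              have hdk : ∀ u : ℤ, X c T u ≤ X c k u := by
                intro u
                rw [hk]
                exact hdec k (by omega) u
              calc deUpdate L R ε N w W (c : ℤ) (X c T) z
                  ≤ deUpdate L R ε N w W (c : ℤ) (X c k) z :=
                    deUpdate_mono hLcoeff hRcoeff hL'pos hR'pos hε0 hε1 hw hBT
                      (hIc k (by omega)).1 hdk z
                _ = X c T z := by
                    rw [hk]
                    exact (hupd c hc hcW k (by omega) z hz1 hz2).symm
          · -- z ≥ c + W, newly covered position
            by_cases hzr : 1 ≤ z ∧ z ≤ (N : ℤ) + (w : ℤ) - 1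
            · rw [hOT z (by omega) hzr.1 hzr.2]
              exact (deUpdate_mem hLcoeff hRcoeff hL'pos hR'pos hε0 hε1 hw hBT z).2
            · rw [hout c T z hzr]
              have hfar : (N : ℤ) + (w : ℤ) ≤ z := by omega
              rw [deUpdate_far hfar hwin.1 hwin.2]
        · unfold deUpdate
          rw [if_neg hwin]
  refine ⟨?_, ?_⟩
  · intro c hc1 hcW t ht z
    obtain ⟨hB, hO, hD⟩ := start c hc1 hcW
    exact (window c hc1 hcW hB hO hD).2 t ht z
  · intro c hc1 hcW t ht z
    obtain ⟨hB, hO, hD⟩ := start c hc1 hcW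
    exact ((window c hc1 hcW hB hO hD).1 t ht).1 z

end SC
end
end

section
/- Assume T > 1 and that for a window index c the shift relation holds: x_z^{(c,T)} = x_{z-1}^{(c,0)} for all z, and x_z^{(c,t+1)} ≤ x_z^{(c,t)} for all z and t ∈ {0,…,T−1}. Let α ∈ [1,2] be such that α·(U(x^{(c,t+1)};ε,c) − U(x^{(c,t)};ε,c)) ≤ −∑_{z=c}^{c+W−1} ρ'(1−x_z^{(c,t)})·(x_z^{(c,t+1)} − x_z^{(c,t)})² for all t ∈ {0,…,T−1}. Then, summing over t and applying Jensen's inequality to the step sizes l_t = x_z^{(c,t)} − x_z^{(c,t+1)} (which are nonnegative and sum over t to x_z^{(c,0)} − x_{z−1}^{(c,0)}), together with ρ'(1−x_z^{(c,t)}) ≥ ρ'(1−x_z^{(c,0)}), one obtains α·(U(x^{(c,0)};ε,c) − U(x^{(c,T)};ε,c)) ≥ (1/T)·∑_{z=c}^{c+W−1} ρ'(1−x_z^{(c,0)})·(x_z^{(c,0)} − x_{z−1}^{(c,0)})². -/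
open Finset

noncomputable section

namespace SC

lemma eval_nonneg_of_coeff_nonneg (p : Polynomial ℝ) (hp : ∀ i, 0 ≤ p.coeff i)
    {x : ℝ} (hx : 0 ≤ x) : 0 ≤ p.eval x := by
  rw [Polynomial.eval_eq_sum_range]
  exact Finset.sum_nonneg fun i _ => mul_nonneg (hp i) (pow_nonneg hx i)

lemma eval_mono_of_coeff_nonneg (p : Polynomial ℝ) (hp : ∀ i, 0 ≤ p.coeff i)
    {x y : ℝ} (hx : 0 ≤ x) (hxy : x ≤ y) : p.eval x ≤ p.eval y := by
  rw [Polynomial.eval_eq_sum_range, Polynomial.eval_eq_sum_range]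
  exact Finset.sum_le_sum fun i _ =>
    mul_le_mul_of_nonneg_left (pow_le_pow_left₀ hx hxy i) (hp i)

lemma deriv_coeff_nonneg (p : Polynomial ℝ) (hp : ∀ i, 0 ≤ p.coeff i) :
    ∀ i, 0 ≤ (Polynomial.derivative p).coeff i := by
  intro i
  rw [Polynomial.coeff_derivative]
  exact mul_nonneg (hp _) (by positivity)

lemma avg_mem {w : ℕ} (hw : 1 ≤ w) (g : ℕ → ℝ) (h : ∀ j, j < w → 0 ≤ g j ∧ g j ≤ 1) :
    0 ≤ (1 / (w : ℝ)) * ∑ j ∈ Finset.range w, g j ∧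
      (1 / (w : ℝ)) * ∑ j ∈ Finset.range w, g j ≤ 1 := by
  have hw' : (0:ℝ) < w := by exact_mod_cast hw
  constructor
  · exact mul_nonneg (by positivity)
      (Finset.sum_nonneg fun j hj => (h j (Finset.mem_range.mp hj)).1)
  · have hs : ∑ j ∈ Finset.range w, g j ≤ (w : ℝ) := by
      calc ∑ j ∈ Finset.range w, g j ≤ ∑ _j ∈ Finset.range w, (1:ℝ) :=
            Finset.sum_le_sum fun j hj => (h j (Finset.mem_range.mp hj)).2
        _ = (w : ℝ) := by simp
    calc (1 / (w : ℝ)) * ∑ j ∈ Finset.range w, g j ≤ (1 / (w : ℝ)) * (w : ℝ) :=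
          mul_le_mul_of_nonneg_left hs (by positivity)
      _ = 1 := by field_simp

/-- key step in the proof of Theorem 1: summing the per-iteration descent
inequality over `t` and applying Jensen's inequality to the step sizes yields a lower bound on
the potential drop over one full window in terms of the initial gaps. -/
theorem potential_drop_lower_bound
    (L R : Polynomial ℝ)
    (hLcoeff : ∀ i, 0 ≤ L.coeff i) (hRcoeff : ∀ i, 0 ≤ R.coeff i)
    (hL1 : L.eval 1 = 1) (hR1 : R.eval 1 = 1)
    (hL'pos : 0 < (Polynomial.derivative L).eval 1)
    (hR'pos : 0 < (Polynomial.derivative R).eval 1)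
    (ε : ℝ) (hε0 : 0 ≤ ε) (hε1 : ε ≤ 1)
    (N w W T : ℕ) (hw : 1 ≤ w) (hwW : w ≤ W) (hWN : W ≤ N)
    -- the windowed-decoding DE solution
    (X : ℕ → ℕ → ℤ → ℝ)
    (hinit : ∀ z : ℤ, 1 ≤ z → z ≤ (N : ℤ) + (w : ℤ) - 1 → X 1 0 z = 1)
    (hout : ∀ c t : ℕ, ∀ z : ℤ, ¬ (1 ≤ z ∧ z ≤ (N : ℤ) + (w : ℤ) - 1) → X c t z = 0)
    (hupd : ∀ c : ℕ, 1 ≤ c → c + W ≤ N + 1 → ∀ t : ℕ, t + 1 ≤ T →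
      ∀ z : ℤ, 1 ≤ z → z ≤ (N : ℤ) + (w : ℤ) - 1 →
      X c (t + 1) z = deUpdate L R ε N w W (c : ℤ) (X c t) z)
    (hshiftwin : ∀ c : ℕ, 1 ≤ c → (c + 1) + W ≤ N + 1 → ∀ z : ℤ, X (c + 1) 0 z = X c T z)
    -- T > 1 and a window index c with the shift relation and monotonicity in t
    (hT : 1 < T)
    (c : ℕ) (hc1 : 1 ≤ c) (hc2 : c + W ≤ N + 1)
    (hshiftrel : ∀ z : ℤ, X c T z = X c 0 (z - 1))
    (hmonoT : ∀ t : ℕ, t < T → ∀ z : ℤ, X c (t + 1) z ≤ X c t z)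
    -- ρ'(1−x_z^{(c,t)}) ≥ ρ'(1−x_z^{(c,0)})
    (hrhoD : ∀ t : ℕ, t ≤ T → ∀ z : ℤ, (c : ℤ) ≤ z → z ≤ (c : ℤ) + (W : ℤ) - 1 →
      rhoD R (1 - X c 0 z) ≤ rhoD R (1 - X c t z))
    -- per-iteration descent inequality with constant α ∈ [1,2]
    (α : ℝ) (hα1 : 1 ≤ α) (hα2 : α ≤ 2)
    (hdesc : ∀ t : ℕ, t < T →
      α * (windowU L R ε w W (c : ℤ) (X c (t + 1)) - windowU L R ε w W (c : ℤ) (X c t)) ≤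
        - ∑ z ∈ Finset.Icc (c : ℤ) ((c : ℤ) + (W : ℤ) - 1),
            rhoD R (1 - X c t z) * (X c (t + 1) z - X c t z) ^ 2) :
    α * (windowU L R ε w W (c : ℤ) (X c 0) - windowU L R ε w W (c : ℤ) (X c T)) ≥
      (1 / (T : ℝ)) * ∑ z ∈ Finset.Icc (c : ℤ) ((c : ℤ) + (W : ℤ) - 1),
        rhoD R (1 - X c 0 z) * (X c 0 z - X c 0 (z - 1)) ^ 2 := by
  have hLd := deriv_coeff_nonneg L hLcoeff
  have hRd := deriv_coeff_nonneg R hRcoeff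
  have hRdd := deriv_coeff_nonneg _ hRd
  have lam_mem : ∀ y : ℝ, 0 ≤ y → y ≤ 1 → 0 ≤ lam L y ∧ lam L y ≤ 1 := by
    intro y h0 h1
    refine ⟨div_nonneg (eval_nonneg_of_coeff_nonneg _ hLd h0) hL'pos.le, ?_⟩
    rw [lam, div_le_one hL'pos]
    exact eval_mono_of_coeff_nonneg _ hLd h0 h1
  have rho_mem : ∀ y : ℝ, 0 ≤ y → y ≤ 1 → 0 ≤ rho R y ∧ rho R y ≤ 1 := by
    intro y h0 h1
    refine ⟨div_nonneg (eval_nonneg_of_coeff_nonneg _ hRd h0) hR'pos.le, ?_⟩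
    rw [rho, div_le_one hR'pos]
    exact eval_mono_of_coeff_nonneg _ hRd h0 h1
  have rhoD_nonneg : ∀ y : ℝ, 0 ≤ y → 0 ≤ rhoD R y := fun y h =>
    div_nonneg (eval_nonneg_of_coeff_nonneg _ hRdd h) hR'pos.le
  have eps_mem : ∀ z : ℤ, 0 ≤ epsAt ε N z ∧ epsAt ε N z ≤ 1 := by
    intro z; unfold epsAt; split_ifs
    · exact ⟨hε0, hε1⟩
    · exact ⟨le_rfl, zero_le_one⟩
  -- the DE update preserves [0,1]
  have upd_mem : ∀ (x : ℤ → ℝ), (∀ z, 0 ≤ x z ∧ x z ≤ 1) → ∀ (cz z : ℤ),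
      0 ≤ deUpdate L R ε N w W cz x z ∧ deUpdate L R ε N w W cz x z ≤ 1 := by
    intro x hx cz z
    rw [deUpdate]
    split_ifs with h
    · refine avg_mem hw _ (fun k _ => ?_)
      have hinner := avg_mem hw (fun j => rho R (1 - x (z + (j:ℤ) - (k:ℤ))))
        (fun j _ => rho_mem _ (by linarith [(hx (z + (j:ℤ) - (k:ℤ))).2])
          (by linarith [(hx (z + (j:ℤ) - (k:ℤ))).1]))
      have hlam := lam_mem (1 - (1 / (w : ℝ)) *
          ∑ j ∈ Finset.range w, rho R (1 - x (z + (j:ℤ) - (k:ℤ))))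
        (by linarith [hinner.2]) (by linarith [hinner.1])
      exact ⟨mul_nonneg (eps_mem _).1 hlam.1,
        mul_le_one₀ (eps_mem _).2 hlam.1 hlam.2⟩
    · exact hx z
  -- the DE solution stays in [0,1]
  have key : ∀ n, 1 ≤ n → n + W ≤ N + 1 → ∀ t, t ≤ T → ∀ z, 0 ≤ X n t z ∧ X n t z ≤ 1 := by
    intro n hn
    induction n, hn using Nat.le_induction with
    | base =>
      intro hW t
      induction t with
      | zero =>
        intro _ z
        by_cases hz : 1 ≤ z ∧ z ≤ (N : ℤ) + (w : ℤ) - 1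
        · rw [hinit z hz.1 hz.2]; exact ⟨zero_le_one, le_rfl⟩
        · rw [hout 1 0 z hz]; exact ⟨le_rfl, zero_le_one⟩
      | succ t ih =>
        intro ht z
        by_cases hz : 1 ≤ z ∧ z ≤ (N : ℤ) + (w : ℤ) - 1
        · rw [hupd 1 le_rfl hW t ht z hz.1 hz.2]
          exact upd_mem _ (ih (by omega)) _ z
        · rw [hout _ _ z hz]; exact ⟨le_rfl, zero_le_one⟩
    | succ n hn ih =>
      intro hW t
      induction t with
      | zero =>
        intro _ z
        rw [hshiftwin n hn hW z]
        exact ih (by omega) T le_rfl z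
      | succ t ih2 =>
        intro ht z
        by_cases hz : 1 ≤ z ∧ z ≤ (N : ℤ) + (w : ℤ) - 1
        · rw [hupd (n + 1) (by omega) hW t ht z hz.1 hz.2]
          exact upd_mem _ (ih2 (by omega)) _ z
        · rw [hout _ _ z hz]; exact ⟨le_rfl, zero_le_one⟩
  have hTpos : (0 : ℝ) < (T : ℝ) := by
    have : 0 < T := by omega
    exact_mod_cast this
  have hX0 : ∀ z, 0 ≤ X c 0 z ∧ X c 0 z ≤ 1 := key c hc1 hc2 0 (Nat.zero_le T)
  have hρ0 : ∀ z : ℤ, 0 ≤ rhoD R (1 - X c 0 z) := fun z =>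
    rhoD_nonneg _ (by linarith [(hX0 z).2])
  set S : Finset ℤ := Finset.Icc (c : ℤ) ((c : ℤ) + (W : ℤ) - 1) with hSdef
  -- Step A: telescoping the descent inequality
  have hA : ∑ t ∈ Finset.range T, ∑ z ∈ S,
        rhoD R (1 - X c t z) * (X c (t + 1) z - X c t z) ^ 2
      ≤ α * (windowU L R ε w W (c : ℤ) (X c 0) - windowU L R ε w W (c : ℤ) (X c T)) := by
    have htel : α * (windowU L R ε w W (c : ℤ) (X c 0) - windowU L R ε w W (c : ℤ) (X c T))
        = ∑ t ∈ Finset.range T, (α * windowU L R ε w W (c : ℤ) (X c t)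
            - α * windowU L R ε w W (c : ℤ) (X c (t + 1))) := by
      rw [Finset.sum_range_sub' (fun t => α * windowU L R ε w W (c : ℤ) (X c t)) T]
      ring
    rw [htel]
    refine Finset.sum_le_sum fun t ht => ?_
    have hd := hdesc t (Finset.mem_range.mp ht)
    have := mul_sub α (windowU L R ε w W (c : ℤ) (X c (t + 1)))
      (windowU L R ε w W (c : ℤ) (X c t))
    linarith
  -- Step B: replace ρ'(1 - x^{(c,t)}) by ρ'(1 - x^{(c,0)})
  have hB : ∑ t ∈ Finset.range T, ∑ z ∈ S,
        rhoD R (1 - X c 0 z) * (X c (t + 1) z - X c t z) ^ 2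
      ≤ ∑ t ∈ Finset.range T, ∑ z ∈ S,
        rhoD R (1 - X c t z) * (X c (t + 1) z - X c t z) ^ 2 := by
    refine Finset.sum_le_sum fun t ht => Finset.sum_le_sum fun z hz => ?_
    have hzm := Finset.mem_Icc.mp hz
    exact mul_le_mul_of_nonneg_right
      (hrhoD t (Finset.mem_range.mp ht).le z hzm.1 hzm.2) (sq_nonneg _)
  -- swap the sums
  have hswap : ∑ t ∈ Finset.range T, ∑ z ∈ S,
        rhoD R (1 - X c 0 z) * (X c (t + 1) z - X c t z) ^ 2
      = ∑ z ∈ S, rhoD R (1 - X c 0 z) *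
          ∑ t ∈ Finset.range T, (X c t z - X c (t + 1) z) ^ 2 := by
    rw [Finset.sum_comm]
    refine Finset.sum_congr rfl fun z _ => ?_
    rw [Finset.mul_sum]
    exact Finset.sum_congr rfl fun t _ => by ring
  -- Cauchy–Schwarz per position z
  have hCS : ∀ z ∈ S, (1 / (T : ℝ)) * (X c 0 z - X c 0 (z - 1)) ^ 2
      ≤ ∑ t ∈ Finset.range T, (X c t z - X c (t + 1) z) ^ 2 := by
    intro z _
    have h1 : X c 0 z - X c 0 (z - 1) = ∑ t ∈ Finset.range T, (X c t z - X c (t + 1) z) := by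
      rw [Finset.sum_range_sub' (fun t => X c t z) T, hshiftrel z]
    have h2 : (∑ t ∈ Finset.range T, (X c t z - X c (t + 1) z)) ^ 2
        ≤ (T : ℝ) * ∑ t ∈ Finset.range T, (X c t z - X c (t + 1) z) ^ 2 := by
      simpa using sq_sum_le_card_mul_sum_sq (s := Finset.range T)
        (f := fun t => X c t z - X c (t + 1) z)
    rw [h1]
    calc (1 / (T : ℝ)) * (∑ t ∈ Finset.range T, (X c t z - X c (t + 1) z)) ^ 2
        ≤ (1 / (T : ℝ)) * ((T : ℝ) * ∑ t ∈ Finset.range T, (X c t z - X c (t + 1) z) ^ 2) :=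
          mul_le_mul_of_nonneg_left h2 (by positivity)
      _ = ∑ t ∈ Finset.range T, (X c t z - X c (t + 1) z) ^ 2 := by
          rw [one_div, inv_mul_cancel_left₀ (ne_of_gt hTpos)]
  have hD : (1 / (T : ℝ)) * ∑ z ∈ S, rhoD R (1 - X c 0 z) * (X c 0 z - X c 0 (z - 1)) ^ 2
      ≤ ∑ z ∈ S, rhoD R (1 - X c 0 z) *
          ∑ t ∈ Finset.range T, (X c t z - X c (t + 1) z) ^ 2 := by
    rw [Finset.mul_sum]
    refine Finset.sum_le_sum fun z hz => ?_
    calc (1 / (T : ℝ)) * (rhoD R (1 - X c 0 z) * (X c 0 z - X c 0 (z - 1)) ^ 2)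
        = rhoD R (1 - X c 0 z) * ((1 / (T : ℝ)) * (X c 0 z - X c 0 (z - 1)) ^ 2) := by ring
      _ ≤ rhoD R (1 - X c 0 z) * ∑ t ∈ Finset.range T, (X c t z - X c (t + 1) z) ^ 2 :=
          mul_le_mul_of_nonneg_left (hCS z hz) (hρ0 z)
  rw [ge_iff_le]
  calc (1 / (T : ℝ)) * ∑ z ∈ S, rhoD R (1 - X c 0 z) * (X c 0 z - X c 0 (z - 1)) ^ 2
      ≤ ∑ z ∈ S, rhoD R (1 - X c 0 z) *
          ∑ t ∈ Finset.range T, (X c t z - X c (t + 1) z) ^ 2 := hD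
    _ = ∑ t ∈ Finset.range T, ∑ z ∈ S,
          rhoD R (1 - X c 0 z) * (X c (t + 1) z - X c t z) ^ 2 := hswap.symm
    _ ≤ ∑ t ∈ Finset.range T, ∑ z ∈ S,
          rhoD R (1 - X c t z) * (X c (t + 1) z - X c t z) ^ 2 := hB
    _ ≤ α * (windowU L R ε w W (c : ℤ) (X c 0) - windowU L R ε w W (c : ℤ) (X c T)) := hA


end SC
end
end
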